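/- The product of measures on σ-rings defined by extending the Halmos product of σ-finite components by ∞ off the σ-finite sets is associative: for measure spaces (S_i, 𝔖_i, μ_i), i=1,2,3, one has (μ₁⊗μ₂)⊗μ₃ = μ₁⊗(μ₂⊗μ₃), under the natural identification (S₁×S₂)×S₃ ≅ S₁×(S₂×S₃). -/
import Mathlib


open Set ENNReal

/-- A family of sets is a σ-ring if it contains `∅` and is closed under
set differences and countable unions. -/
def IsSigmaRing {α : Type*} (C : Set (Set α)) : Prop :=
  ∅ ∈ C ∧ (∀ A B : Set α, A ∈ C → B ∈ C → A \ B ∈ C) ∧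
    ∀ f : ℕ → Set α, (∀ n, f n ∈ C) → (⋃ n, f n) ∈ C

/-- The σ-ring generated by a family of sets. -/
def genSR {α : Type*} (D : Set (Set α)) : Set (Set α) :=
  ⋂₀ {C | IsSigmaRing C ∧ D ⊆ C}

/-- A measure on a σ-ring: countably additive, vanishing on `∅`. -/
def IsMeasure {α : Type*} (C : Set (Set α)) (μ : Set α → ℝ≥0∞) : Prop :=
  μ ∅ = 0 ∧ ∀ f : ℕ → Set α, (∀ n, f n ∈ C) →
    Pairwise (Function.onFun Disjoint f) → μ (⋃ n, f n) = ∑' n, μ (f n)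

/-- The family of μ-σ-finite sets: countable unions of sets of finite measure. -/
def sigmaFin {α : Type*} (C : Set (Set α)) (μ : Set α → ℝ≥0∞) : Set (Set α) :=
  {A | ∃ g : ℕ → Set α, (∀ n, g n ∈ C ∧ μ (g n) < ⊤) ∧ A = ⋃ n, g n}

/-- Restriction of a family of sets to a set `S`. -/
def restrictFam {α : Type*} (D : Set (Set α)) (S : Set α) : Set (Set α) :=
  (fun A => A ∩ S) '' D

/-- The product σ-ring, generated by measurable rectangles. -/
def prodSR {α β : Type*} (S : Set (Set α)) (T : Set (Set β)) : Set (Set (α × β)) :=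
  genSR {R | ∃ A ∈ S, ∃ B ∈ T, R = A ×ˢ B}

/-- The σ-algebra generated by a family of sets. -/
def genSA {α : Type*} (D : Set (Set α)) : MeasurableSpace α :=
  MeasurableSpace.generateFrom D

/-- The (extended) Lebesgue integral of a nonnegative function with respect to a
measure on a σ-ring, as the supremum of integrals of simple functions below it. -/
noncomputable def lintSR {α : Type*} (C : Set (Set α)) (μ : Set α → ℝ≥0∞)
    (f : α → ℝ≥0∞) : ℝ≥0∞ :=
  ⨆ (n : ℕ) (c : Fin n → ℝ≥0∞) (A : Fin n → Set α) (_ : ∀ i, A i ∈ C)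
    (_ : ∀ x, (∑ i, (A i).indicator (fun _ => c i) x) ≤ f x),
    ∑ i, c i * μ (A i)

/-- The positive part of an extended real, as an `ℝ≥0∞`. -/
noncomputable def epos (x : EReal) : ℝ≥0∞ := (x ⊔ 0).abs

/-- Measurability of an extended-real function with respect to a σ-ring:
measurable for the generated σ-algebra, with support in the σ-ring. -/
def SRMeasurableE {α : Type*} (C : Set (Set α)) (f : α → EReal) : Prop :=
  @Measurable α EReal (genSA C) _ f ∧ {x | f x ≠ 0} ∈ C

/-- The Lebesgue integral of an extended-real function w.r.t. a measure on a σ-ring. -/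
noncomputable def integralE {α : Type*} (C : Set (Set α)) (μ : Set α → ℝ≥0∞)
    (f : α → EReal) : EReal :=
  ((lintSR C μ fun x => epos (f x) : ℝ≥0∞) : EReal) -
    ((lintSR C μ fun x => epos (-f x) : ℝ≥0∞) : EReal)

/-- Integrability of an extended-real function w.r.t. a measure on a σ-ring. -/
def IntegrableE {α : Type*} (C : Set (Set α)) (μ : Set α → ℝ≥0∞)
    (f : α → EReal) : Prop :=
  SRMeasurableE C f ∧ lintSR C μ (fun x => (f x).abs) < ⊤

/-- `lam` is the product of the measures `μ` and `ν` on σ-rings `S`, `T`: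
the unique measure on the product σ-ring whose σ-finite component is the Halmos
product of the σ-finite components. -/
def IsProdMeasure {α β : Type*} (S : Set (Set α)) (T : Set (Set β))
    (μ : Set α → ℝ≥0∞) (ν : Set β → ℝ≥0∞) (lam : Set (α × β) → ℝ≥0∞) : Prop :=
  IsMeasure (prodSR S T) lam ∧
  (∀ A ∈ S, ∀ B ∈ T, μ A < ⊤ → ν B < ⊤ → lam (A ×ˢ B) = μ A * ν B) ∧
  sigmaFin (prodSR S T) lam =
    genSR {R | ∃ A ∈ S, ∃ B ∈ T, μ A < ⊤ ∧ ν B < ⊤ ∧ R = A ×ˢ B}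

section SRBasic
variable {α : Type*}

theorem isSigmaRing_genSR (D : Set (Set α)) : IsSigmaRing (genSR D) := by
  refine ⟨?_, ?_, ?_⟩
  · intro C hC; exact hC.1.1
  · intro A B hA hB C hC
    exact hC.1.2.1 A B (hA C hC) (hB C hC)
  · intro f hf C hC
    exact hC.1.2.2 f fun n => hf n C hC

theorem subset_genSR (D : Set (Set α)) : D ⊆ genSR D :=
  fun X hX C hC => hC.2 hX

theorem genSR_subset {D C : Set (Set α)} (hC : IsSigmaRing C) (h : D ⊆ C) :
    genSR D ⊆ C := fun X hX => hX C ⟨hC, h⟩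

namespace IsSigmaRing
variable {C : Set (Set α)}

theorem empty_mem (hC : IsSigmaRing C) : ∅ ∈ C := hC.1
theorem diff_mem (hC : IsSigmaRing C) {A B : Set α} (hA : A ∈ C) (hB : B ∈ C) : A \ B ∈ C := hC.2.1 A B hA hB
theorem iUnion_mem (hC : IsSigmaRing C) {f : ℕ → Set α} (hf : ∀ n, f n ∈ C) : (⋃ n, f n) ∈ C := hC.2.2 f hf

theorem inter_mem (hC : IsSigmaRing C) {A B : Set α} (hA : A ∈ C) (hB : B ∈ C) : A ∩ B ∈ C := by
  have : A ∩ B = A \ (A \ B) := by rw [Set.diff_diff_right_self]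
  rw [this]; exact hC.diff_mem hA (hC.diff_mem hA hB)

theorem union_mem (hC : IsSigmaRing C) {A B : Set α} (hA : A ∈ C) (hB : B ∈ C) : A ∪ B ∈ C := by
  have : A ∪ B = ⋃ n : ℕ, (if n = 0 then A else B) := by
    ext x
    simp only [Set.mem_iUnion, Set.mem_union]
    constructor
    · rintro (h | h)
      · exact ⟨0, by simpa⟩
      · exact ⟨1, by simpa⟩
    · rintro ⟨n, h⟩
      split at h
      · exact Or.inl h
      · exact Or.inr h
  rw [this]
  exact hC.iUnion_mem fun n => by split <;> assumption

theorem biUnion_range_mem (hC : IsSigmaRing C) {f : ℕ → Set α} (hf : ∀ n, f n ∈ C) (n : ℕ) :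
    (⋃ k ∈ Finset.range n, f k) ∈ C := by
  induction n with
  | zero => simpa using hC.empty_mem
  | succ n ih =>
      rw [Finset.range_add_one]
      rw [Finset.set_biUnion_insert]
      exact hC.union_mem (hf n) ih

end IsSigmaRing
end SRBasic

section MeasBasic
variable {α : Type*} {C : Set (Set α)} {μ : Set α → ℝ≥0∞}

theorem measure_union_disj (hC : IsSigmaRing C) (hμ : IsMeasure C μ)
    {A B : Set α} (hA : A ∈ C) (hB : B ∈ C) (hd : Disjoint A B) :
    μ (A ∪ B) = μ A + μ B := by
  set f : ℕ → Set α := fun n => if n = 0 then A else if n = 1 then B else ∅ with hf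
  have hmem : ∀ n, f n ∈ C := by
    intro n; simp only [hf]; split
    · exact hA
    · split
      · exact hB
      · exact hC.empty_mem
  have hU : (⋃ n, f n) = A ∪ B := by
    ext x
    simp only [Set.mem_iUnion, Set.mem_union, hf]
    constructor
    · rintro ⟨n, h⟩
      rcases n with _ | _ | n <;> simp_all
    · rintro (h | h)
      · exact ⟨0, by simpa⟩
      · exact ⟨1, by simpa⟩
  have hpw : Pairwise (Function.onFun Disjoint f) := by
    intro i j hij
    simp only [Function.onFun, hf]
    rcases i with _ | _ | i <;> rcases j with _ | _ | j <;>
      simp_all [hd, hd.symm, Set.disjoint_empty, Set.empty_disjoint]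
  have := hμ.2 f hmem hpw
  rw [hU] at this
  rw [this, tsum_eq_sum (s := {0, 1}) (f := fun n => μ (f n))
    (by intro b hb; simp at hb; have hb0 : b ≠ 0 := hb.1; have hb1 : b ≠ 1 := hb.2
        simp only [hf]; rw [if_neg hb0, if_neg hb1]; exact hμ.1)]
  simp [hf]

theorem measure_diff_add (hC : IsSigmaRing C) (hμ : IsMeasure C μ)
    {A B : Set α} (hA : A ∈ C) (hB : B ∈ C) (hAB : A ⊆ B) :
    μ A + μ (B \ A) = μ B := by
  have h := measure_union_disj hC hμ hA (hC.diff_mem hB hA) Set.disjoint_sdiff_right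
  rw [Set.union_diff_cancel hAB] at h
  exact h.symm

theorem measure_mono_sr (hC : IsSigmaRing C) (hμ : IsMeasure C μ)
    {A B : Set α} (hA : A ∈ C) (hB : B ∈ C) (hAB : A ⊆ B) : μ A ≤ μ B := by
  rw [← measure_diff_add hC hμ hA hB hAB]; exact le_self_add

/-- Disjointification of a sequence of sets. -/
def dseq (f : ℕ → Set α) : ℕ → Set α
  | 0 => f 0
  | n + 1 => f (n + 1) \ ⋃ k ∈ Finset.range (n + 1), f k

theorem dseq_subset (f : ℕ → Set α) : ∀ n, dseq f n ⊆ f n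
  | 0 => subset_rfl
  | n + 1 => Set.diff_subset

theorem iUnion_dseq (f : ℕ → Set α) : ⋃ n, dseq f n = ⋃ n, f n := by
  apply Set.Subset.antisymm
  · exact Set.iUnion_mono (dseq_subset f)
  · intro x hx
    classical
    rw [Set.mem_iUnion] at hx
    have hm := Nat.find_spec hx
    set m := Nat.find hx with hmdef
    rcases m with _ | m
    · exact Set.mem_iUnion.2 ⟨0, hm⟩
    · refine Set.mem_iUnion.2 ⟨m + 1, ?_⟩
      refine ⟨hm, ?_⟩
      simp only [Set.mem_iUnion, Finset.mem_range]
      rintro ⟨k, hk, hxk⟩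
      exact Nat.find_min hx (by omega : k < Nat.find hx) hxk

theorem pairwise_dseq (f : ℕ → Set α) : Pairwise (Function.onFun Disjoint (dseq f)) := by
  have key : ∀ i j, i < j → Disjoint (dseq f i) (dseq f j) := by
    intro i j hij
    rcases j with _ | j
    · omega
    rw [Set.disjoint_left]
    intro x hxi hxj
    have hxfi : x ∈ f i := dseq_subset f i hxi
    apply hxj.2
    simp only [Set.mem_iUnion, Finset.mem_range]
    exact ⟨i, hij, hxfi⟩
  intro i j hij
  rcases lt_or_gt_of_ne hij with h | h
  · exact key i j h
  · exact (key j i h).symm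

theorem dseq_mem (hC : IsSigmaRing C) {f : ℕ → Set α} (hf : ∀ n, f n ∈ C) (n : ℕ) :
    dseq f n ∈ C := by
  rcases n with _ | n
  · exact hf 0
  · exact hC.diff_mem (hf (n + 1)) (hC.biUnion_range_mem hf (n + 1))

theorem measure_iUnion_monotone (hC : IsSigmaRing C) (hμ : IsMeasure C μ)
    {g : ℕ → Set α} (hg : ∀ n, g n ∈ C) (hmono : Monotone g) :
    μ (⋃ n, g n) = ⨆ n, μ (g n) := by
  have hbiU : ∀ n, (⋃ k ∈ Finset.range (n + 1), g k) = g n := by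
    intro n
    apply Set.Subset.antisymm
    · intro x hx
      simp only [Set.mem_iUnion, Finset.mem_range] at hx
      obtain ⟨k, hk, hxk⟩ := hx
      exact hmono (by omega : k ≤ n) hxk
    · intro x hx
      exact Set.mem_iUnion.2 ⟨n, Set.mem_iUnion.2 ⟨Finset.self_mem_range_succ n, hx⟩⟩
  have hd : ∀ n, dseq g (n + 1) = g (n + 1) \ g n := by
    intro n; rw [dseq, hbiU n]
  have hsum : ∀ n, (∑ i ∈ Finset.range (n + 1), μ (dseq g i)) = μ (g n) := by
    intro n
    induction n with
    | zero => simp [dseq]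
    | succ n ih =>
        rw [Finset.sum_range_succ, ih, hd n]
        exact measure_diff_add hC hμ (hg n) (hg (n + 1)) (hmono (Nat.le_succ n))
  have := hμ.2 (dseq g) (dseq_mem hC hg) (pairwise_dseq g)
  rw [iUnion_dseq] at this
  rw [this, ENNReal.tsum_eq_iSup_nat]
  apply le_antisymm
  · apply iSup_le
    intro n
    rcases n with _ | n
    · simp
    · rw [hsum n]
      exact le_iSup (fun n => μ (g n)) n
  · apply iSup_le
    intro n
    rw [← hsum n]
    exact le_iSup (fun k => ∑ i ∈ Finset.range k, μ (dseq g i)) (n + 1)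

theorem mem_sigmaFin_of_lt_top {A : Set α} (hA : A ∈ C) (hfin : μ A < ⊤) :
    A ∈ sigmaFin C μ :=
  ⟨fun _ => A, fun _ => ⟨hA, hfin⟩, (Set.iUnion_const A).symm⟩

end MeasBasic

section Lambda
variable {α : Type*}

/-- A λ-ring: contains `∅`, closed under proper differences and countable
pairwise-disjoint unions. -/
def IsLambdaRing (C : Set (Set α)) : Prop :=
  ∅ ∈ C ∧ (∀ A B : Set α, A ∈ C → B ∈ C → B ⊆ A → A \ B ∈ C) ∧
    ∀ f : ℕ → Set α, (∀ n, f n ∈ C) → Pairwise (Function.onFun Disjoint f) →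
      (⋃ n, f n) ∈ C

def genLR (D : Set (Set α)) : Set (Set α) := ⋂₀ {C | IsLambdaRing C ∧ D ⊆ C}

theorem isLambdaRing_genLR (D : Set (Set α)) : IsLambdaRing (genLR D) := by
  refine ⟨?_, ?_, ?_⟩
  · intro C hC; exact hC.1.1
  · intro A B hA hB hBA C hC
    exact hC.1.2.1 A B (hA C hC) (hB C hC) hBA
  · intro f hf hpw C hC
    exact hC.1.2.2 f (fun n => hf n C hC) hpw

theorem subset_genLR (D : Set (Set α)) : D ⊆ genLR D :=
  fun X hX C hC => hC.2 hX

theorem genLR_subset {D C : Set (Set α)} (hC : IsLambdaRing C) (h : D ⊆ C) :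
    genLR D ⊆ C := fun X hX => hX C ⟨hC, h⟩

theorem IsSigmaRing.isLambdaRing {C : Set (Set α)} (hC : IsSigmaRing C) :
    IsLambdaRing C :=
  ⟨hC.1, fun A B hA hB _ => hC.2.1 A B hA hB, fun f hf _ => hC.2.2 f hf⟩

namespace IsLambdaRing
variable {C : Set (Set α)}

theorem empty_mem (hC : IsLambdaRing C) : ∅ ∈ C := hC.1
theorem pdiff_mem (hC : IsLambdaRing C) {A B : Set α} (hA : A ∈ C) (hB : B ∈ C)
    (hBA : B ⊆ A) : A \ B ∈ C := hC.2.1 A B hA hB hBA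
theorem disjUnion_mem (hC : IsLambdaRing C) {f : ℕ → Set α} (hf : ∀ n, f n ∈ C)
    (hpw : Pairwise (Function.onFun Disjoint f)) : (⋃ n, f n) ∈ C := hC.2.2 f hf hpw

theorem union_mem_of_disjoint (hC : IsLambdaRing C) {A B : Set α} (hA : A ∈ C)
    (hB : B ∈ C) (hd : Disjoint A B) : A ∪ B ∈ C := by
  set f : ℕ → Set α := fun n => if n = 0 then A else if n = 1 then B else ∅ with hf
  have hU : (⋃ n, f n) = A ∪ B := by
    ext x
    simp only [Set.mem_iUnion, Set.mem_union, hf]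
    constructor
    · rintro ⟨n, h⟩
      rcases n with _ | _ | n <;> simp_all
    · rintro (h | h)
      · exact ⟨0, by simpa⟩
      · exact ⟨1, by simpa⟩
  rw [← hU]
  refine hC.disjUnion_mem ?_ ?_
  · intro n; simp only [hf]; split
    · exact hA
    · split
      · exact hB
      · exact hC.empty_mem
  · intro i j hij
    simp only [Function.onFun, hf]
    rcases i with _ | _ | i <;> rcases j with _ | _ | j <;>
      simp_all [hd, hd.symm, Set.disjoint_empty, Set.empty_disjoint]

end IsLambdaRing

/-- Dynkin-type theorem for σ-rings: if `P` is a π-system containing `∅`, then the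
λ-ring generated by `P` is a σ-ring; hence any λ-ring containing `P` contains `genSR P`. -/
theorem genSR_subset_of_lambdaRing {P D : Set (Set α)}
    (hP0 : ∅ ∈ P) (hPi : ∀ A ∈ P, ∀ B ∈ P, A ∩ B ∈ P)
    (hD : IsLambdaRing D) (hPD : P ⊆ D) : genSR P ⊆ D := by
  set L := genLR P with hLdef
  have hL : IsLambdaRing L := isLambdaRing_genLR P
  -- Step 1: closure under intersection with elements of P
  have h1 : ∀ Q ∈ P, ∀ A ∈ L, A ∩ Q ∈ L := by
    intro Q hQ A hA
    have : L ⊆ {X | X ∩ Q ∈ L} := by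
      apply genLR_subset
      · refine ⟨by simpa using hL.empty_mem, ?_, ?_⟩
        · intro X Y hX hY hYX
          have : (X \ Y) ∩ Q = (X ∩ Q) \ (Y ∩ Q) := by
            ext x; simp; tauto
          simp only [Set.mem_setOf_eq, this]
          exact hL.pdiff_mem hX hY (Set.inter_subset_inter_left Q hYX)
        · intro f hf hpw
          have : (⋃ n, f n) ∩ Q = ⋃ n, f n ∩ Q := by
            rw [Set.iUnion_inter]
          simp only [Set.mem_setOf_eq, this]
          exact hL.disjUnion_mem hf fun i j hij =>
            ((hpw hij).mono Set.inter_subset_left Set.inter_subset_left)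
      · intro X hX
        exact subset_genLR P (hPi X hX Q hQ)
    exact this hA
  -- Step 2: closure under intersection
  have h2 : ∀ A ∈ L, ∀ B ∈ L, A ∩ B ∈ L := by
    intro A hA B hB
    have : L ⊆ {X | X ∩ B ∈ L} := by
      apply genLR_subset
      · refine ⟨by simpa using hL.empty_mem, ?_, ?_⟩
        · intro X Y hX hY hYX
          have : (X \ Y) ∩ B = (X ∩ B) \ (Y ∩ B) := by
            ext x; simp; tauto
          simp only [Set.mem_setOf_eq, this]
          exact hL.pdiff_mem hX hY (Set.inter_subset_inter_left B hYX)
        · intro f hf hpw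
          have : (⋃ n, f n) ∩ B = ⋃ n, f n ∩ B := by
            rw [Set.iUnion_inter]
          simp only [Set.mem_setOf_eq, this]
          exact hL.disjUnion_mem hf fun i j hij =>
            ((hpw hij).mono Set.inter_subset_left Set.inter_subset_left)
      · intro Q hQ
        simp only [Set.mem_setOf_eq, Set.inter_comm]
        exact h1 Q hQ B hB
    exact this hA
  -- general differences
  have hdiff : ∀ A ∈ L, ∀ B ∈ L, A \ B ∈ L := by
    intro A hA B hB
    have : A \ B = A \ (A ∩ B) := (Set.diff_self_inter).symm
    rw [this]
    exact hL.pdiff_mem hA (h2 A hA B hB) Set.inter_subset_left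
  -- binary unions
  have hunion : ∀ A ∈ L, ∀ B ∈ L, A ∪ B ∈ L := by
    intro A hA B hB
    have hBA : B \ A ∈ L := hdiff B hB A hA
    have : A ∪ B = A ∪ (B \ A) := (Set.union_diff_self).symm
    rw [this]
    exact hL.union_mem_of_disjoint hA hBA Set.disjoint_sdiff_right
  -- countable unions
  have hcount : ∀ f : ℕ → Set α, (∀ n, f n ∈ L) → (⋃ n, f n) ∈ L := by
    intro f hf
    have hbi : ∀ n, (⋃ k ∈ Finset.range n, f k) ∈ L := by
      intro n
      induction n with
      | zero => simpa using hL.empty_mem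
      | succ n ih =>
          rw [Finset.range_add_one, Finset.set_biUnion_insert]
          exact hunion _ (hf n) _ ih
    have hdmem : ∀ n, dseq f n ∈ L := by
      intro n
      rcases n with _ | n
      · exact hf 0
      · exact hdiff _ (hf (n + 1)) _ (hbi (n + 1))
    rw [← iUnion_dseq]
    exact hL.disjUnion_mem hdmem (pairwise_dseq f)
  have hLsr : IsSigmaRing L := ⟨hL.empty_mem, fun A B hA hB => hdiff A hA B hB, hcount⟩
  exact (genSR_subset hLsr (subset_genLR P)).trans (genLR_subset hD hPD)

end Lambda

section Uniqueness
variable {α : Type*}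

/-- Two measures on a σ-ring agreeing (with finite values) on a π-system `P`
containing `∅` agree on the σ-ring generated by `P`. -/
theorem measure_eq_on_genSR {C : Set (Set α)} (hC : IsSigmaRing C)
    {lam lam' : Set α → ℝ≥0∞} (hl : IsMeasure C lam) (hl' : IsMeasure C lam')
    {P : Set (Set α)} (hPC : P ⊆ C) (hP0 : ∅ ∈ P)
    (hPi : ∀ A ∈ P, ∀ B ∈ P, A ∩ B ∈ P)
    (heq : ∀ p ∈ P, lam p = lam' p) (hfin : ∀ p ∈ P, lam p < ⊤) :
    ∀ E ∈ genSR P, lam E = lam' E := by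
  have hsub : genSR P ⊆ C := genSR_subset hC hPC
  have hGsr : IsSigmaRing (genSR P) := isSigmaRing_genSR P
  -- Stage A : agreement on E ∩ p for p ∈ P
  have hA : ∀ E ∈ genSR P, ∀ p ∈ P, lam (E ∩ p) = lam' (E ∩ p) := by
    have : genSR P ⊆ {E | E ∈ C ∧ ∀ p ∈ P, lam (E ∩ p) = lam' (E ∩ p)} := by
      apply genSR_subset_of_lambdaRing hP0 hPi
      · refine ⟨⟨hC.empty_mem, ?_⟩, ?_, ?_⟩
        · intro p _; simp [hl.1, hl'.1]
        · rintro A B ⟨hAC, hAeq⟩ ⟨hBC, hBeq⟩ hBA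
          refine ⟨hC.diff_mem hAC hBC, ?_⟩
          intro p hp
          have hsplit : A ∩ p = (B ∩ p) ∪ ((A \ B) ∩ p) := by
            ext x; simp only [Set.mem_inter_iff, Set.mem_union, Set.mem_diff]
            constructor
            · rintro ⟨hxA, hxp⟩
              by_cases hxB : x ∈ B
              · exact Or.inl ⟨hxB, hxp⟩
              · exact Or.inr ⟨⟨hxA, hxB⟩, hxp⟩
            · rintro (⟨hxB, hxp⟩ | ⟨⟨hxA, _⟩, hxp⟩)
              · exact ⟨hBA hxB, hxp⟩
              · exact ⟨hxA, hxp⟩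
          have hdisj : Disjoint (B ∩ p) ((A \ B) ∩ p) := by
            rw [Set.disjoint_left]
            rintro x ⟨hxB, _⟩ ⟨⟨_, hxB'⟩, _⟩
            exact hxB' hxB
          have hBpC : B ∩ p ∈ C := hC.inter_mem hBC (hPC hp)
          have hDpC : (A \ B) ∩ p ∈ C := hC.inter_mem (hC.diff_mem hAC hBC) (hPC hp)
          have e1 : lam (A ∩ p) = lam (B ∩ p) + lam ((A \ B) ∩ p) := by
            rw [hsplit]; exact measure_union_disj hC hl hBpC hDpC hdisj
          have e2 : lam' (A ∩ p) = lam' (B ∩ p) + lam' ((A \ B) ∩ p) := by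
            rw [hsplit]; exact measure_union_disj hC hl' hBpC hDpC hdisj
          have hBfin : lam (B ∩ p) ≠ ⊤ := by
            have : lam (B ∩ p) ≤ lam p :=
              measure_mono_sr hC hl hBpC (hPC hp) Set.inter_subset_right
            exact (this.trans_lt (hfin p hp)).ne
          have hgoal : lam (B ∩ p) + lam ((A \ B) ∩ p)
              = lam (B ∩ p) + lam' ((A \ B) ∩ p) := by
            calc lam (B ∩ p) + lam ((A \ B) ∩ p) = lam (A ∩ p) := e1.symm
              _ = lam' (A ∩ p) := hAeq p hp
              _ = lam' (B ∩ p) + lam' ((A \ B) ∩ p) := e2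
              _ = lam (B ∩ p) + lam' ((A \ B) ∩ p) := by rw [hBeq p hp]
          exact (ENNReal.add_right_inj hBfin).1 hgoal
        · intro f hf hpw
          refine ⟨hC.iUnion_mem fun n => (hf n).1, ?_⟩
          intro p hp
          have h1 : (⋃ n, f n) ∩ p = ⋃ n, f n ∩ p := Set.iUnion_inter p f
          have hmem : ∀ n, f n ∩ p ∈ C := fun n => hC.inter_mem (hf n).1 (hPC hp)
          have hpw' : Pairwise (Function.onFun Disjoint fun n => f n ∩ p) :=
            fun i j hij => (hpw hij).mono Set.inter_subset_left Set.inter_subset_left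
          rw [h1, hl.2 _ hmem hpw', hl'.2 _ hmem hpw']
          exact tsum_congr fun n => (hf n).2 p hp
      · intro p hp
        exact ⟨hPC hp, fun q hq => by
          rw [show p ∩ q = p ∩ q from rfl]
          exact heq _ (hPi p hp q hq)⟩
    intro E hE p hp
    exact (this hE).2 p hp
  -- Stage B : covering
  have hcov : ∀ E ∈ genSR P, ∃ r : ℕ → Set α, (∀ n, r n ∈ P) ∧ E ⊆ ⋃ n, r n := by
    have : genSR P ⊆ {E | ∃ r : ℕ → Set α, (∀ n, r n ∈ P) ∧ E ⊆ ⋃ n, r n} := by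
      apply genSR_subset
      · refine ⟨⟨fun _ => ∅, fun _ => hP0, by simp⟩, ?_, ?_⟩
        · rintro A B ⟨r, hr, hAr⟩ _
          exact ⟨r, hr, Set.diff_subset.trans hAr⟩
        · intro f hf
          choose r hr hfr using hf
          refine ⟨fun k => r k.unpair.1 k.unpair.2, fun k => hr _ _, ?_⟩
          intro x hx
          rw [Set.mem_iUnion] at hx
          obtain ⟨n, hn⟩ := hx
          obtain ⟨m, hm⟩ := Set.mem_iUnion.1 (hfr n hn)
          exact Set.mem_iUnion.2 ⟨Nat.pair n m, by simpa [Nat.unpair_pair] using hm⟩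
      · intro p hp
        exact ⟨fun _ => p, fun _ => hp, fun x hx => Set.mem_iUnion.2 ⟨0, hx⟩⟩
    exact fun E hE => this hE
  -- Stage C : induction over finite unions of the cover
  intro E hE
  obtain ⟨r, hrP, hEr⟩ := hcov E hE
  set F : ℕ → Set α := fun n => ⋃ k ∈ Finset.range n, r k with hFdef
  have hFG : ∀ n, F n ∈ genSR P := fun n =>
    hGsr.biUnion_range_mem (fun k => subset_genSR P (hrP k)) n
  have key : ∀ n, ∀ E' ∈ genSR P,
      lam (E' ∩ F n) = lam' (E' ∩ F n) ∧ lam (E' ∩ F n) < ⊤ := by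
    intro n
    induction n with
    | zero =>
        intro E' _
        simp only [hFdef]
        simp [hl.1, hl'.1]
    | succ n ih =>
        intro E' hE'
        have hFn1 : F (n + 1) = F n ∪ r n := by
          simp only [hFdef]
          rw [Finset.range_add_one, Finset.set_biUnion_insert, Set.union_comm]
        set X := E' ∩ F n with hX
        set Y := E' ∩ r n with hY
        have hXG : X ∈ genSR P := hGsr.inter_mem hE' (hFG n)
        have hYG : Y ∈ genSR P := hGsr.inter_mem hE' (subset_genSR P (hrP n))
        have hsplit : E' ∩ F (n + 1) = X ∪ (Y \ X) := by
          rw [hFn1, Set.union_diff_self]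
          rw [Set.inter_union_distrib_left]
        have hYXint : Y ∩ F n = (E' ∩ r n) ∩ F n := rfl
        have ihY := ih (E' ∩ r n) hYG
        have hY_eq : lam Y = lam' Y := hA E' hE' (r n) (hrP n)
        have hYfin : lam Y < ⊤ :=
          (measure_mono_sr hC hl (hsub hYG) (hPC (hrP n))
            Set.inter_subset_right).trans_lt (hfin _ (hrP n))
        -- lam (Y \ X) = lam' (Y \ X) : from lam Y = lam (Y∩X) + lam (Y\X)
        have hYsplit : Y = (Y ∩ X) ∪ (Y \ X) := by
          ext x; by_cases hx : x ∈ X <;> simp [hx] <;> tauto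
        have hYXmem : Y ∩ X ∈ C := hsub (hGsr.inter_mem hYG hXG)
        have hYdXmem : Y \ X ∈ C := hsub (hGsr.diff_mem hYG hXG)
        have hdisj1 : Disjoint (Y ∩ X) (Y \ X) := by
          rw [Set.disjoint_left]; rintro x ⟨_, hx⟩ ⟨_, hx'⟩; exact hx' hx
        have e1 : lam Y = lam (Y ∩ X) + lam (Y \ X) := by
          conv_lhs => rw [hYsplit]
          exact measure_union_disj hC hl hYXmem hYdXmem hdisj1
        have e2 : lam' Y = lam' (Y ∩ X) + lam' (Y \ X) := by
          conv_lhs => rw [hYsplit]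
          exact measure_union_disj hC hl' hYXmem hYdXmem hdisj1
        have hYXeq : lam (Y ∩ X) = lam' (Y ∩ X) := by
          have : Y ∩ X = (E' ∩ r n) ∩ F n := by
            rw [hX, hY]; ext x; simp; tauto
          rw [this]; exact (ih (E' ∩ r n) hYG).1
        have hYXfin : lam (Y ∩ X) ≠ ⊤ := by
          have : Y ∩ X = (E' ∩ r n) ∩ F n := by
            rw [hX, hY]; ext x; simp; tauto
          rw [this]; exact (ih (E' ∩ r n) hYG).2.ne
        have hYdX_eq : lam (Y \ X) = lam' (Y \ X) :=
          (ENNReal.add_right_inj hYXfin).1 (by rw [← e1, hY_eq, e2, hYXeq])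
        have hdisj2 : Disjoint X (Y \ X) := Set.disjoint_sdiff_right
        have hXmem : X ∈ C := hsub hXG
        have f1 : lam (E' ∩ F (n + 1)) = lam X + lam (Y \ X) := by
          rw [hsplit]; exact measure_union_disj hC hl hXmem hYdXmem hdisj2
        have f2 : lam' (E' ∩ F (n + 1)) = lam' X + lam' (Y \ X) := by
          rw [hsplit]; exact measure_union_disj hC hl' hXmem hYdXmem hdisj2
        constructor
        · rw [f1, f2, (ih E' hE').1, hYdX_eq]
        · rw [f1]
          have h1 : lam (Y \ X) ≤ lam Y :=
            measure_mono_sr hC hl hYdXmem (hsub hYG) Set.diff_subset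
          exact ENNReal.add_lt_top.2 ⟨(ih E' hE').2, h1.trans_lt hYfin⟩
  -- Stage D : continuity from below
  have hg : ∀ n, E ∩ F n ∈ C := fun n => hsub (hGsr.inter_mem hE (hFG n))
  have hFmono : ∀ {m n : ℕ}, m ≤ n → F m ⊆ F n := by
    intro m n hmn x hx
    simp only [hFdef, Set.mem_iUnion, Finset.mem_range] at *
    obtain ⟨k, hk, hxk⟩ := hx
    exact ⟨k, by omega, hxk⟩
  have hmono : Monotone fun n => E ∩ F n :=
    fun m n hmn => Set.inter_subset_inter_right E (hFmono hmn)
  have hUg : (⋃ n, E ∩ F n) = E := by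
    rw [← Set.inter_iUnion]
    apply Set.inter_eq_self_of_subset_left
    intro x hx
    obtain ⟨n, hn⟩ := Set.mem_iUnion.1 (hEr hx)
    refine Set.mem_iUnion.2 ⟨n + 1, ?_⟩
    simp only [hFdef, Set.mem_iUnion, Finset.mem_range]
    exact ⟨n, by omega, hn⟩
  calc lam E = lam (⋃ n, E ∩ F n) := by rw [hUg]
    _ = ⨆ n, lam (E ∩ F n) := measure_iUnion_monotone hC hl hg hmono
    _ = ⨆ n, lam' (E ∩ F n) := iSup_congr fun n => (key n E hE).1
    _ = lam' (⋃ n, E ∩ F n) := (measure_iUnion_monotone hC hl' hg hmono).symm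
    _ = lam' E := by rw [hUg]

end Uniqueness

section Transport
variable {α γ : Type*}

theorem isSigmaRing_comap {C : Set (Set γ)} (hC : IsSigmaRing C) (F : Set α → Set γ)
    (h0 : F ∅ = ∅) (hdiff : ∀ A B, F (A \ B) = F A \ F B)
    (hU : ∀ f : ℕ → Set α, F (⋃ n, f n) = ⋃ n, F (f n)) :
    IsSigmaRing {A | F A ∈ C} := by
  refine ⟨?_, ?_, ?_⟩
  · show F ∅ ∈ C; rw [h0]; exact hC.empty_mem
  · intro A B hA hB; show F (A \ B) ∈ C; rw [hdiff]; exact hC.diff_mem hA hB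
  · intro f hf; show F (⋃ n, f n) ∈ C; rw [hU]; exact hC.iUnion_mem hf

theorem isMeasure_comp {C : Set (Set γ)} {ν : Set γ → ℝ≥0∞} (hν : IsMeasure C ν)
    (F : Set α → Set γ) {D : Set (Set α)} (hD : ∀ A ∈ D, F A ∈ C)
    (h0 : F ∅ = ∅)
    (hU : ∀ f : ℕ → Set α, F (⋃ n, f n) = ⋃ n, F (f n))
    (hdisj : ∀ A B : Set α, Disjoint A B → Disjoint (F A) (F B)) :
    IsMeasure D (fun A => ν (F A)) := by
  refine ⟨by show ν (F ∅) = 0; rw [h0]; exact hν.1, ?_⟩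
  intro f hf hpw
  show ν (F (⋃ n, f n)) = _
  rw [hU]
  exact hν.2 _ (fun n => hD _ (hf n)) fun i j hij => hdisj _ _ (hpw hij)

end Transport

/-- associativity of the product of arbitrary measures on
σ-rings, under the identification `(S₁ × S₂) × S₃ ≃ S₁ × (S₂ × S₃)`. -/
theorem stmt_11 {α β γ : Type*}
    (S₁ : Set (Set α)) (S₂ : Set (Set β)) (S₃ : Set (Set γ))
    (μ₁ : Set α → ℝ≥0∞) (μ₂ : Set β → ℝ≥0∞) (μ₃ : Set γ → ℝ≥0∞)
    (h₁ : IsSigmaRing S₁) (h₂ : IsSigmaRing S₂) (h₃ : IsSigmaRing S₃)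
    (hμ₁ : IsMeasure S₁ μ₁) (hμ₂ : IsMeasure S₂ μ₂) (hμ₃ : IsMeasure S₃ μ₃)
    (lam₁₂ : Set (α × β) → ℝ≥0∞) (hlam₁₂ : IsProdMeasure S₁ S₂ μ₁ μ₂ lam₁₂)
    (lam₂₃ : Set (β × γ) → ℝ≥0∞) (hlam₂₃ : IsProdMeasure S₂ S₃ μ₂ μ₃ lam₂₃)
    (lamL : Set ((α × β) × γ) → ℝ≥0∞)
    (hlamL : IsProdMeasure (prodSR S₁ S₂) S₃ lam₁₂ μ₃ lamL)
    (lamR : Set (α × (β × γ)) → ℝ≥0∞)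
    (hlamR : IsProdMeasure S₁ (prodSR S₂ S₃) μ₁ lam₂₃ lamR) :
    ∀ C ∈ prodSR (prodSR S₁ S₂) S₃,
      lamL C = lamR ((Equiv.prodAssoc α β γ) '' C) := by
  classical
  obtain ⟨hM12, hR12, hF12⟩ := hlam₁₂
  obtain ⟨hM23, hR23, hF23⟩ := hlam₂₃
  obtain ⟨hML, hRL, hFL⟩ := hlamL
  obtain ⟨hMR, hRR, hFR⟩ := hlamR
  set e := Equiv.prodAssoc α β γ with he
  have hC12 : IsSigmaRing (prodSR S₁ S₂) := isSigmaRing_genSR _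
  have hC23 : IsSigmaRing (prodSR S₂ S₃) := isSigmaRing_genSR _
  have hCL : IsSigmaRing (prodSR (prodSR S₁ S₂) S₃) := isSigmaRing_genSR _
  have hCR : IsSigmaRing (prodSR S₁ (prodSR S₂ S₃)) := isSigmaRing_genSR _
  -- image identities
  have himg : ∀ (s : Set α) (t : Set β) (u : Set γ),
      e '' ((s ×ˢ t) ×ˢ u) = s ×ˢ (t ×ˢ u) := by
    intro s t u
    rw [Equiv.image_eq_preimage_symm]
    ext ⟨x, y, z⟩
    simp [he, Equiv.prodAssoc, and_assoc]
  have himg' : ∀ (s : Set α) (t : Set β) (u : Set γ),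
      e.symm '' (s ×ˢ (t ×ˢ u)) = (s ×ˢ t) ×ˢ u := by
    intro s t u; rw [← himg s t u, Equiv.symm_image_image]
  -- set algebra identities
  have prod_diff : ∀ (A B : Set (α × β)) (u : Set γ),
      (A \ B) ×ˢ u = A ×ˢ u \ B ×ˢ u := by
    intro A B u; ext ⟨x, y⟩; simp; tauto
  have prod_diff' : ∀ (s : Set α) (Q Q' : Set (β × γ)),
      s ×ˢ (Q \ Q') = s ×ˢ Q \ s ×ˢ Q' := by
    intro s Q Q'; ext ⟨x, y⟩; simp; tauto
  have prod_disj : ∀ (A B : Set (α × β)) (u : Set γ), Disjoint A B →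
      Disjoint (A ×ˢ u) (B ×ˢ u) := by
    intro A B u h
    rw [Set.disjoint_iff_inter_eq_empty] at h ⊢
    rw [Set.prod_inter_prod, h, Set.empty_prod]
  -- membership transport
  have mem1 : ∀ u ∈ S₃, ∀ R ∈ prodSR S₁ S₂,
      e '' (R ×ˢ u) ∈ prodSR S₁ (prodSR S₂ S₃) := by
    intro u hu
    have hsr : IsSigmaRing {R : Set (α × β) |
        e '' (R ×ˢ u) ∈ prodSR S₁ (prodSR S₂ S₃)} := by
      apply isSigmaRing_comap hCR (fun R => e '' (R ×ˢ u))
      · simp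
      · intro A B; rw [prod_diff, Set.image_diff e.injective]
      · intro f; rw [Set.iUnion_prod_const, Set.image_iUnion]
    intro R hR
    refine genSR_subset hsr ?_ hR
    rintro R' ⟨A, hA, B, hB, rfl⟩
    show e '' ((A ×ˢ B) ×ˢ u) ∈ prodSR S₁ (prodSR S₂ S₃)
    rw [himg]
    exact subset_genSR _ ⟨A, hA, B ×ˢ u, subset_genSR _ ⟨B, hB, u, hu, rfl⟩, rfl⟩
  have mem2 : ∀ X ∈ prodSR (prodSR S₁ S₂) S₃,
      e '' X ∈ prodSR S₁ (prodSR S₂ S₃) := by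
    intro X hX
    have hsr : IsSigmaRing {X : Set ((α × β) × γ) |
        e '' X ∈ prodSR S₁ (prodSR S₂ S₃)} := by
      apply isSigmaRing_comap hCR (fun X => e '' X)
      · simp
      · intro A B; exact Set.image_diff e.injective A B
      · intro f; exact Set.image_iUnion
    refine genSR_subset hsr ?_ hX
    rintro X' ⟨R, hR, u, hu, rfl⟩
    exact mem1 u hu R hR
  -- key computation : lamR on associated rectangles with σ-finite left factor
  have key6 : ∀ u ∈ S₃, μ₃ u < ⊤ → ∀ R ∈ prodSR S₁ S₂, lam₁₂ R < ⊤ →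
      lamR (e '' (R ×ˢ u)) = lam₁₂ R * μ₃ u := by
    intro u hu huf
    have hmeas1 : IsMeasure (prodSR S₁ S₂) (fun R => lam₁₂ R * μ₃ u) := by
      refine ⟨by show lam₁₂ ∅ * μ₃ u = 0; rw [hM12.1, zero_mul], ?_⟩
      intro f hf hpw
      show lam₁₂ (⋃ n, f n) * μ₃ u = _
      rw [hM12.2 f hf hpw, ENNReal.tsum_mul_right]
    have hmeas2 : IsMeasure (prodSR S₁ S₂) (fun R => lamR (e '' (R ×ˢ u))) := by
      apply isMeasure_comp hMR (fun R => e '' (R ×ˢ u)) (fun R hR => mem1 u hu R hR)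
      · simp
      · intro f; rw [Set.iUnion_prod_const, Set.image_iUnion]
      · intro A B h
        exact (Set.disjoint_image_iff e.injective).2 (prod_disj A B u h)
    have hP120 : ∅ ∈ {R : Set (α × β) | ∃ A ∈ S₁, ∃ B ∈ S₂,
        μ₁ A < ⊤ ∧ μ₂ B < ⊤ ∧ R = A ×ˢ B} := by
      refine ⟨∅, h₁.empty_mem, ∅, h₂.empty_mem, ?_, ?_, by simp⟩
      · rw [hμ₁.1]; exact ENNReal.zero_lt_top
      · rw [hμ₂.1]; exact ENNReal.zero_lt_top
    have hP12i : ∀ p ∈ {R : Set (α × β) | ∃ A ∈ S₁, ∃ B ∈ S₂,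
        μ₁ A < ⊤ ∧ μ₂ B < ⊤ ∧ R = A ×ˢ B}, ∀ q ∈ {R : Set (α × β) | ∃ A ∈ S₁, ∃ B ∈ S₂,
        μ₁ A < ⊤ ∧ μ₂ B < ⊤ ∧ R = A ×ˢ B}, p ∩ q ∈ {R : Set (α × β) | ∃ A ∈ S₁, ∃ B ∈ S₂,
        μ₁ A < ⊤ ∧ μ₂ B < ⊤ ∧ R = A ×ˢ B} := by
      rintro p ⟨A, hA, B, hB, hAf, hBf, rfl⟩ q ⟨A', hA', B', hB', hAf', hBf', rfl⟩
      refine ⟨A ∩ A', h₁.inter_mem hA hA', B ∩ B', h₂.inter_mem hB hB', ?_, ?_,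
        Set.prod_inter_prod⟩
      · exact (measure_mono_sr h₁ hμ₁ (h₁.inter_mem hA hA') hA
          Set.inter_subset_left).trans_lt hAf
      · exact (measure_mono_sr h₂ hμ₂ (h₂.inter_mem hB hB') hB
          Set.inter_subset_left).trans_lt hBf
    have hP12C : {R : Set (α × β) | ∃ A ∈ S₁, ∃ B ∈ S₂,
        μ₁ A < ⊤ ∧ μ₂ B < ⊤ ∧ R = A ×ˢ B} ⊆ prodSR S₁ S₂ := by
      rintro p ⟨A, hA, B, hB, _, _, rfl⟩
      exact subset_genSR _ ⟨A, hA, B, hB, rfl⟩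
    have hagree := measure_eq_on_genSR hC12 hmeas1 hmeas2 hP12C hP120 hP12i
      (by
        rintro p ⟨A, hA, B, hB, hAf, hBf, rfl⟩
        show lam₁₂ (A ×ˢ B) * μ₃ u = lamR (e '' ((A ×ˢ B) ×ˢ u))
        have hBu : B ×ˢ u ∈ prodSR S₂ S₃ := subset_genSR _ ⟨B, hB, u, hu, rfl⟩
        have h23 : lam₂₃ (B ×ˢ u) = μ₂ B * μ₃ u := hR23 B hB u hu hBf huf
        have h23f : lam₂₃ (B ×ˢ u) < ⊤ := by
          rw [h23]; exact ENNReal.mul_lt_top hBf huf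
        rw [himg, hRR A hA (B ×ˢ u) hBu hAf h23f, h23, hR12 A hA B hB hAf hBf,
          mul_assoc])
      (by
        rintro p ⟨A, hA, B, hB, hAf, hBf, rfl⟩
        show lam₁₂ (A ×ˢ B) * μ₃ u < ⊤
        rw [hR12 A hA B hB hAf hBf]
        exact ENNReal.mul_lt_top (ENNReal.mul_lt_top hAf hBf) huf)
    intro R hR hRf
    have hRsf : R ∈ sigmaFin (prodSR S₁ S₂) lam₁₂ := mem_sigmaFin_of_lt_top hR hRf
    rw [hF12] at hRsf
    exact (hagree R hRsf).symm
  -- the PL π-system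
  set PL := {R : Set ((α × β) × γ) | ∃ A ∈ prodSR S₁ S₂, ∃ B ∈ S₃,
      lam₁₂ A < ⊤ ∧ μ₃ B < ⊤ ∧ R = A ×ˢ B} with hPLdef
  have hPL0 : ∅ ∈ PL := by
    refine ⟨∅, hC12.empty_mem, ∅, h₃.empty_mem, ?_, ?_, by simp⟩
    · rw [hM12.1]; exact ENNReal.zero_lt_top
    · rw [hμ₃.1]; exact ENNReal.zero_lt_top
  have hPLi : ∀ p ∈ PL, ∀ q ∈ PL, p ∩ q ∈ PL := by
    rintro p ⟨A, hA, B, hB, hAf, hBf, rfl⟩ q ⟨A', hA', B', hB', hAf', hBf', rfl⟩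
    refine ⟨A ∩ A', hC12.inter_mem hA hA', B ∩ B', h₃.inter_mem hB hB', ?_, ?_,
      Set.prod_inter_prod⟩
    · exact (measure_mono_sr hC12 hM12 (hC12.inter_mem hA hA') hA
        Set.inter_subset_left).trans_lt hAf
    · exact (measure_mono_sr h₃ hμ₃ (h₃.inter_mem hB hB') hB
        Set.inter_subset_left).trans_lt hBf
  have hPLC : PL ⊆ prodSR (prodSR S₁ S₂) S₃ := by
    rintro p ⟨A, hA, B, hB, _, _, rfl⟩
    exact subset_genSR _ ⟨A, hA, B, hB, rfl⟩
  -- transported right measure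
  have hlam' : IsMeasure (prodSR (prodSR S₁ S₂) S₃) (fun X => lamR (e '' X)) := by
    apply isMeasure_comp hMR (fun X => e '' X) mem2
    · simp
    · intro f; exact Set.image_iUnion
    · intro A B h; exact (Set.disjoint_image_iff e.injective).2 h
  -- main case split
  intro X hX
  by_cases hXfin : X ∈ genSR PL
  · refine measure_eq_on_genSR hCL hML hlam' hPLC hPL0 hPLi ?_ ?_ X hXfin
    · rintro p ⟨R, hR, u, hu, hRf, huf, rfl⟩
      show lamL (R ×ˢ u) = lamR (e '' (R ×ˢ u))
      rw [hRL R hR u hu hRf huf, key6 u hu huf R hR hRf]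
    · rintro p ⟨R, hR, u, hu, hRf, huf, rfl⟩
      rw [hRL R hR u hu hRf huf]
      exact ENNReal.mul_lt_top hRf huf
  · -- both sides infinite
    have mem3 : ∀ Z ∈ genSR {R : Set (α × (β × γ)) | ∃ A ∈ S₁, ∃ B ∈ prodSR S₂ S₃,
        μ₁ A < ⊤ ∧ lam₂₃ B < ⊤ ∧ R = A ×ˢ B}, e.symm '' Z ∈ genSR PL := by
      have hsr : IsSigmaRing {Z : Set (α × (β × γ)) | e.symm '' Z ∈ genSR PL} := by
        apply isSigmaRing_comap (isSigmaRing_genSR PL) (fun Z => e.symm '' Z)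
        · simp
        · intro A B; exact Set.image_diff e.symm.injective A B
        · intro f; exact Set.image_iUnion
      intro Z hZ
      refine genSR_subset hsr ?_ hZ
      rintro Z' ⟨A, hA, Q, hQ, hAf, hQf, rfl⟩
      have hQsf : Q ∈ sigmaFin (prodSR S₂ S₃) lam₂₃ := mem_sigmaFin_of_lt_top hQ hQf
      rw [hF23] at hQsf
      have hsr2 : IsSigmaRing {Q' : Set (β × γ) |
          e.symm '' (A ×ˢ Q') ∈ genSR PL} := by
        apply isSigmaRing_comap (isSigmaRing_genSR PL) (fun Q' => e.symm '' (A ×ˢ Q'))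
        · simp
        · intro Q₁ Q₂; rw [prod_diff', Set.image_diff e.symm.injective]
        · intro f; rw [Set.prod_iUnion, Set.image_iUnion]
      refine genSR_subset hsr2 ?_ hQsf
      rintro Q' ⟨B, hB, w, hw, hBf, hwf, rfl⟩
      show e.symm '' (A ×ˢ (B ×ˢ w)) ∈ genSR PL
      rw [himg']
      refine subset_genSR _ ⟨A ×ˢ B, subset_genSR _ ⟨A, hA, B, hB, rfl⟩, w, hw, ?_,
        hwf, rfl⟩
      rw [hR12 A hA B hB hAf hBf]
      exact ENNReal.mul_lt_top hAf hBf
    have h1 : lamL X = ⊤ := by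
      by_contra h
      refine hXfin ?_
      rw [← hFL]
      exact mem_sigmaFin_of_lt_top hX (lt_top_iff_ne_top.2 h)
    have h2 : lamR (e '' X) = ⊤ := by
      by_contra h
      have hmem : e '' X ∈ sigmaFin (prodSR S₁ (prodSR S₂ S₃)) lamR :=
        mem_sigmaFin_of_lt_top (mem2 X hX) (lt_top_iff_ne_top.2 h)
      rw [hFR] at hmem
      have := mem3 _ hmem
      rw [Equiv.symm_image_image] at this
      exact hXfin this
    rw [h1, h2]
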